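/- If a system S of linear inequalities L_i(x) ≤ r_i has no solution, then S admits nonnegative multipliers λ_i, not all zero, with Σ λ_i L_i = 0 and Σ λ_i r_i ≤ 0; consequently, adjoining the tautology 0 ≤ 1 with an appropriate multiplier, the augmented system has nonnegative multipliers, not all zero, with Σ λ_i L_i = 0 and Σ λ_i r_i = 0. -/

import Mathlib

open Finset RealInnerProductSpace

section Cone
set_option linter.unusedSectionVars false
variable {k : Type*} [Fintype k] [DecidableEq k]
variable {E : Type*} [NormedAddCommGroup E] [InnerProductSpace ℝ E] [FiniteDimensional ℝ E]

lemma sum_extend (w : k → E) (t : Finset k) (G : k → ℝ) (hG : ∀ i ∉ t, G i = 0) :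
    ∑ i : ↥t, G i • w i = ∑ i, G i • w i := by
  rw [Finset.sum_coe_sort t (fun i => G i • w i)]
  exact Finset.sum_subset (Finset.subset_univ t)
    (fun i _ hi => by rw [hG i hi, zero_smul])

/-- Conic Carathéodory: any nonnegative combination is a nonnegative combination over
an "independent" subset. -/
lemma carath (w : k → E) (s : Finset k) :
    ∀ lam : k → ℝ, (∀ i, 0 ≤ lam i) → (∀ i ∉ s, lam i = 0) →
    ∃ t ⊆ s, (∀ g : k → ℝ, (∀ i ∉ t, g i = 0) → ∑ i, g i • w i = 0 → g = 0) ∧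
      ∃ mu : k → ℝ, (∀ i, 0 ≤ mu i) ∧ (∀ i ∉ t, mu i = 0) ∧
        ∑ i, mu i • w i = ∑ i, lam i • w i := by
  induction s using Finset.strongInduction with
  | _ s ih =>
  intro lam h0 hs
  by_cases hP : ∀ g : k → ℝ, (∀ i ∉ s, g i = 0) → ∑ i, g i • w i = 0 → g = 0
  · exact ⟨s, le_refl _, hP, lam, h0, hs, rfl⟩
  · push_neg at hP
    obtain ⟨g₀, hg₀s, hg₀sum, hg₀ne⟩ := hP
    have hex : ∃ g : k → ℝ, (∀ i ∉ s, g i = 0) ∧ (∑ i, g i • w i = 0) ∧ ∃ i, 0 < g i := by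
      obtain ⟨i₁, hi₁⟩ := Function.ne_iff.mp hg₀ne
      rcases lt_or_gt_of_ne hi₁ with h | h
      · refine ⟨-g₀, fun i hi => by simp [hg₀s i hi], by simp [hg₀sum], i₁, by simpa using h⟩
      · exact ⟨g₀, hg₀s, hg₀sum, i₁, h⟩
    obtain ⟨g, hgs, hgsum, i₁, hi₁⟩ := hex
    have hFne : (s.filter (fun i => 0 < g i)).Nonempty := by
      refine ⟨i₁, Finset.mem_filter.mpr ⟨?_, hi₁⟩⟩
      by_contra h
      rw [hgs i₁ h] at hi₁; exact lt_irrefl 0 hi₁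
    obtain ⟨i₀, hi₀F, hi₀min⟩ := Finset.exists_min_image _ (fun i => lam i / g i) hFne
    obtain ⟨hi₀s, hgi₀⟩ := Finset.mem_filter.mp hi₀F
    set t₀ : ℝ := lam i₀ / g i₀ with ht₀def
    have ht₀ : 0 ≤ t₀ := div_nonneg (h0 i₀) hgi₀.le
    set lam' : k → ℝ := fun i => lam i - t₀ * g i with hlam'def
    have hlam'0 : ∀ i, 0 ≤ lam' i := by
      intro i
      by_cases hgi : 0 < g i
      · have his : i ∈ s := by
          by_contra h
          rw [hgs i h] at hgi; exact lt_irrefl 0 hgi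
        have := hi₀min i (Finset.mem_filter.mpr ⟨his, hgi⟩)
        have : t₀ * g i ≤ lam i := by
          rw [le_div_iff₀ hgi] at this
          linarith
        simp only [hlam'def]; linarith
      · push_neg at hgi
        have : t₀ * g i ≤ 0 := mul_nonpos_of_nonneg_of_nonpos ht₀ hgi
        have := h0 i
        simp only [hlam'def]; linarith
    have hlam's : ∀ i ∉ s.erase i₀, lam' i = 0 := by
      intro i hi
      by_cases hii : i = i₀
      · subst hii
        simp only [hlam'def, ht₀def]
        field_simp
        ring
      · have hins : i ∉ s := by
          intro hins
          exact hi (Finset.mem_erase.mpr ⟨hii, hins⟩)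
        simp only [hlam'def, hs i hins, hgs i hins, mul_zero, sub_zero]
    have hlam'sum : ∑ i, lam' i • w i = ∑ i, lam i • w i := by
      have : ∑ i, lam' i • w i = ∑ i, lam i • w i - t₀ • ∑ i, g i • w i := by
        rw [Finset.smul_sum, ← Finset.sum_sub_distrib]
        refine Finset.sum_congr rfl fun i _ => ?_
        rw [smul_smul, ← sub_smul]
      rw [this, hgsum, smul_zero, sub_zero]
    obtain ⟨t, hts, hP, mu, hmu0, hmut, hmusum⟩ :=
      ih (s.erase i₀) (Finset.erase_ssubset hi₀s) lam' hlam'0 hlam's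
    exact ⟨t, hts.trans (Finset.erase_subset _ _), hP, mu, hmu0, hmut,
      hmusum.trans hlam'sum⟩

lemma coneOf_isClosed (w : k → E) (t : Finset k)
    (hP : ∀ g : k → ℝ, (∀ i ∉ t, g i = 0) → ∑ i, g i • w i = 0 → g = 0) :
    IsClosed {x : E | ∃ mu : k → ℝ, (∀ i, 0 ≤ mu i) ∧ (∀ i ∉ t, mu i = 0) ∧
      ∑ i, mu i • w i = x} := by
  set T : (↥t → ℝ) →ₗ[ℝ] E := ∑ i : ↥t, LinearMap.smulRight (LinearMap.proj i) (w i) with hT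
  have hTapp : ∀ c : ↥t → ℝ, T c = ∑ i : ↥t, c i • w i := by
    intro c
    simp [hT, LinearMap.sum_apply]
  have hker : LinearMap.ker T = ⊥ := by
    rw [LinearMap.ker_eq_bot']
    intro c hc
    set G : k → ℝ := fun i => if h : i ∈ t then c ⟨i, h⟩ else 0 with hGdef
    have hGt : ∀ i ∉ t, G i = 0 := fun i hi => dif_neg hi
    have hGsum : ∑ i, G i • w i = 0 := by
      rw [← sum_extend w t G hGt]
      rw [hTapp] at hc
      rw [← hc]
      refine Finset.sum_congr rfl fun i _ => ?_
      simp [hGdef]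
    have hG0 := hP G hGt hGsum
    funext i
    have := congrFun hG0 (i : k)
    simpa [hGdef] using this
  have hemb := LinearMap.isClosedEmbedding_of_injective hker
  have hset : {x : E | ∃ mu : k → ℝ, (∀ i, 0 ≤ mu i) ∧ (∀ i ∉ t, mu i = 0) ∧
      ∑ i, mu i • w i = x} = T '' {c | ∀ i, 0 ≤ c i} := by
    ext x
    constructor
    · rintro ⟨mu, hmu0, hmut, hmusum⟩
      refine ⟨fun i => mu i, fun i => hmu0 i, ?_⟩
      rw [hTapp, sum_extend w t _ hmut]
      exact hmusum
    · rintro ⟨c, hc0, hcx⟩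
      set G : k → ℝ := fun i => if h : i ∈ t then c ⟨i, h⟩ else 0 with hGdef
      refine ⟨G, fun i => ?_, fun i hi => dif_neg hi, ?_⟩
      · by_cases h : i ∈ t
        · simpa [hGdef, dif_pos h] using hc0 ⟨i, h⟩
        · simp [hGdef, dif_neg h]
      · rw [← sum_extend w t G (fun i hi => dif_neg hi), ← hcx, hTapp]
        refine Finset.sum_congr rfl fun i _ => ?_
        simp [hGdef]
  rw [hset]
  refine hemb.isClosedMap _ ?_
  have : {c : ↥t → ℝ | ∀ i, 0 ≤ c i} = ⋂ i, {c : ↥t → ℝ | 0 ≤ c i} := by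
    ext c; simp [Set.mem_iInter]
  rw [this]
  exact isClosed_iInter fun i => isClosed_le continuous_const (continuous_apply i)

lemma coneSet_isClosed (w : k → E) :
    IsClosed {x : E | ∃ lam : k → ℝ, (∀ i, 0 ≤ lam i) ∧ ∑ i, lam i • w i = x} := by
  have hset : {x : E | ∃ lam : k → ℝ, (∀ i, 0 ≤ lam i) ∧ ∑ i, lam i • w i = x} =
      ⋃ (t : Finset k), ⋃ (_ : ∀ g : k → ℝ, (∀ i ∉ t, g i = 0) → ∑ i, g i • w i = 0 → g = 0),
        {x : E | ∃ mu : k → ℝ, (∀ i, 0 ≤ mu i) ∧ (∀ i ∉ t, mu i = 0) ∧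
          ∑ i, mu i • w i = x} := by
    ext x
    simp only [Set.mem_setOf_eq, Set.mem_iUnion]
    constructor
    · rintro ⟨lam, h0, hsum⟩
      obtain ⟨t, _, hP, mu, hmu0, hmut, hmusum⟩ :=
        carath w Finset.univ lam h0 (fun i hi => absurd (Finset.mem_univ i) hi)
      exact ⟨t, hP, mu, hmu0, hmut, hmusum.trans hsum⟩
    · rintro ⟨t, hP, mu, hmu0, hmut, hmusum⟩
      exact ⟨mu, hmu0, hmusum⟩
  rw [hset]
  refine isClosed_iUnion_of_finite fun t => ?_
  exact isClosed_iUnion_of_finite fun hP => coneOf_isClosed w t hP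

/-- The main Farkas-type consequence: if the point is in the cone we get multipliers,
otherwise we get a separating vector. -/
lemma cone_mem_or_sep (w : k → E) (b : E) :
    (∃ lam : k → ℝ, (∀ i, 0 ≤ lam i) ∧ ∑ i, lam i • w i = b) ∨
    (∃ y : E, (∀ i, 0 ≤ ⟪w i, y⟫) ∧ ⟪y, b⟫ < 0) := by
  set S : Set E := {x : E | ∃ lam : k → ℝ, (∀ i, 0 ≤ lam i) ∧ ∑ i, lam i • w i = x} with hS
  by_cases hb : b ∈ S
  · exact Or.inl hb
  · set K : ConvexCone ℝ E :=
      { carrier := S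
        smul_mem' := by
          rintro c hc x ⟨lam, h0, hsum⟩
          refine ⟨fun i => c * lam i, fun i => mul_nonneg hc.le (h0 i), ?_⟩
          rw [← hsum, Finset.smul_sum]
          exact Finset.sum_congr rfl fun i _ => by simp [smul_smul]
        add_mem' := by
          rintro x ⟨lam, h0, hsum⟩ y ⟨lam', h0', hsum'⟩
          refine ⟨fun i => lam i + lam' i, fun i => add_nonneg (h0 i) (h0' i), ?_⟩
          rw [← hsum, ← hsum', ← Finset.sum_add_distrib]
          exact Finset.sum_congr rfl fun i _ => by simp [add_smul] } with hK
    have hne : (K : Set E).Nonempty :=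
      ⟨0, ⟨fun _ => 0, fun i => le_refl 0, by simp⟩⟩
    have hclosed : IsClosed (K : Set E) := coneSet_isClosed w
    obtain ⟨y, hy1, hy2⟩ : ∃ y, (∀ x ∈ K, 0 ≤ ⟪x, y⟫) ∧ ⟪y, b⟫ < 0 := by
      obtain ⟨y, hy1, hy2⟩ := ProperCone.hyperplane_separation' (E := E) (x₀ := b)
        ⟨K.toPointedCone (ConvexCone.Pointed.of_nonempty_of_isClosed hne hclosed), hclosed⟩ hb
      exact ⟨y, fun x hx => hy1 x hx, by rwa [real_inner_comm]⟩
    refine Or.inr ⟨y, fun i => ?_, hy2⟩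
    refine hy1 (w i) ?_
    refine ⟨fun o => if o = i then 1 else 0, fun o => by positivity, ?_⟩
    simp [ite_smul]


end Cone

/-- The generators of the Farkas cone. -/
noncomputable def fvec {n : ℕ} {ι : Type*} [Fintype ι] (a : ι → Fin n → ℝ) (r : ι → ℝ) :
    Option ι → EuclideanSpace ℝ (Option (Fin n)) := fun o =>
  Option.rec (EuclideanSpace.single none 1)
    (fun i => EuclideanSpace.single none (r i) +
      ∑ j, EuclideanSpace.single (some j) (a i j)) o

lemma farkas_aux {n : ℕ} {ι : Type*} [Fintype ι] [DecidableEq ι]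
    (a : ι → Fin n → ℝ) (r : ι → ℝ)
    (hunsolv : ¬ ∃ x : Fin n → ℝ, ∀ i, ∑ j, x j * a i j ≤ r i) :
    ∃ lam : ι → ℝ, (∀ i, 0 ≤ lam i) ∧ (∀ j, ∑ i, lam i * a i j = 0) ∧
      ∑ i, lam i * r i < 0 := by
  rcases cone_mem_or_sep (fvec a r) (EuclideanSpace.single none (-1)) with
    ⟨lam, h0, hsum⟩ | ⟨y, hy1, hy2⟩
  · have key : ∀ u : EuclideanSpace ℝ (Option (Fin n)),
        ∑ o, lam o * ⟪u, fvec a r o⟫ = ⟪u, EuclideanSpace.single none (-1)⟫ := by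
      intro u
      rw [← hsum, inner_sum]
      exact Finset.sum_congr rfl fun o _ => (real_inner_smul_right _ _ _).symm
    have hcoord : ∀ j : Fin n, ∑ i, lam (some i) * a i j = 0 := by
      intro j
      have h := key (EuclideanSpace.single (some j) 1)
      rw [Fintype.sum_option] at h
      simpa [fvec, inner_add_right, inner_sum, EuclideanSpace.inner_single_left,
        EuclideanSpace.single_apply, conj_trivial] using h
    have hnone : lam none + ∑ i, lam (some i) * r i = -1 := by
      have h := key (EuclideanSpace.single none 1)
      rw [Fintype.sum_option] at h
      simpa [fvec, inner_add_right, inner_sum, EuclideanSpace.inner_single_left,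
        EuclideanSpace.single_apply, conj_trivial] using h
    refine ⟨fun i => lam (some i), fun i => h0 (some i), hcoord, ?_⟩
    have := h0 none
    linarith
  · exfalso
    apply hunsolv
    have hyn : 0 < y none := by
      rw [EuclideanSpace.inner_single_right] at hy2
      simp only [conj_trivial] at hy2
      linarith
    refine ⟨fun j => -(y (some j)) / y none, fun i => ?_⟩
    have h1 := hy1 (some i)
    have hval : ⟪fvec a r (some i), y⟫ = r i * y none + ∑ j, a i j * y (some j) := by
      simp [fvec, inner_add_left, sum_inner, EuclideanSpace.inner_single_left, conj_trivial]
    rw [hval] at h1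
    have hx : ∑ j, (-(y (some j)) / y none) * a i j =
        (-(∑ j, a i j * y (some j))) / y none := by
      rw [neg_div, Finset.sum_div, ← Finset.sum_neg_distrib]
      refine Finset.sum_congr rfl fun j _ => ?_
      ring
    rw [hx, div_le_iff₀ hyn]
    linarith

theorem stmt_14 {n : ℕ} {ι : Type*} [Fintype ι]
    (L : ι → ((Fin n → ℝ) →ₗ[ℝ] ℝ)) (r : ι → ℝ)
    (hunsolv : ¬ ∃ x : Fin n → ℝ, ∀ i, L i x ≤ r i) :
    (∃ lam : ι → ℝ, (∀ i, 0 ≤ lam i) ∧ lam ≠ 0 ∧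
      ∑ i, lam i • L i = 0 ∧ ∑ i, lam i * r i ≤ 0) ∧
    (∃ (lam : ι → ℝ) (mu : ℝ), (∀ i, 0 ≤ lam i) ∧ 0 ≤ mu ∧
      (lam ≠ 0 ∨ mu ≠ 0) ∧
      ∑ i, lam i • L i = 0 ∧ (∑ i, lam i * r i) + mu * 1 = 0) := by
  classical
  have hLx : ∀ (i : ι) (x : Fin n → ℝ),
      L i x = ∑ j, x j * (L i fun j' => if j = j' then 1 else 0) := by
    intro i x
    rw [LinearMap.pi_apply_eq_sum_univ (L i) x]
    exact Finset.sum_congr rfl fun j _ => by rw [smul_eq_mul]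
  have hunsolv' : ¬ ∃ x : Fin n → ℝ, ∀ i,
      ∑ j, x j * (L i fun j' => if j = j' then 1 else 0) ≤ r i := by
    rintro ⟨x, hx⟩
    exact hunsolv ⟨x, fun i => by rw [hLx i x]; exact hx i⟩
  obtain ⟨lam, h0, hcoord, hlt⟩ :=
    farkas_aux (fun i j => L i fun j' => if j = j' then 1 else 0) r hunsolv'
  have hzero : ∑ i, lam i • L i = 0 := by
    refine LinearMap.ext fun x => ?_
    simp only [LinearMap.coe_sum, Finset.sum_apply, LinearMap.smul_apply, smul_eq_mul,
      LinearMap.zero_apply]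
    calc ∑ i, lam i * L i x
        = ∑ i, ∑ j, lam i * (x j * (L i fun j' => if j = j' then 1 else 0)) := by
          refine Finset.sum_congr rfl fun i _ => ?_
          rw [hLx i x, Finset.mul_sum]
      _ = ∑ j, ∑ i, lam i * (x j * (L i fun j' => if j = j' then 1 else 0)) :=
          Finset.sum_comm
      _ = ∑ j, x j * ∑ i, lam i * (L i fun j' => if j = j' then 1 else 0) := by
          refine Finset.sum_congr rfl fun j _ => ?_
          rw [Finset.mul_sum]
          exact Finset.sum_congr rfl fun i _ => by ring
      _ = 0 := by
          refine Finset.sum_eq_zero fun j _ => ?_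
          rw [hcoord j, mul_zero]
  have hne : lam ≠ 0 := by
    intro h
    rw [h] at hlt
    simp at hlt
  exact ⟨⟨lam, h0, hne, hzero, hlt.le⟩,
    ⟨lam, -(∑ i, lam i * r i), h0, by linarith, Or.inl hne, hzero, by ring⟩⟩
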